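/- Let n ≥ 2 be an integer and b ∈ ℝ. Define H(x,y) = (x² + y²)^(n−1)/(2b·x^(n−1) − 1) on the open set U = {(x,y) ∈ ℝ² : 2b·x^(n−1) ≠ 1}. Then for every (x,y) ∈ U, (−y + 2b·x^(n−1)·y)·∂H/∂x(x,y) + (x + b·x^(n−2)·y² − b·x^n)·∂H/∂y(x,y) = 0, i.e. H is a first integral of the system ẋ = −y + 2b·x^(n−1)·y, ẏ = x + b·x^(n−2)·y² − b·x^n. -/

import Mathlib

/-- `H(x,y) = (x² + y²)^(n−1)/(2b x^(n−1) − 1)` is a first integral of the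
system `ẋ = −y + 2b x^(n−1) y, ẏ = x + b x^(n−2) y² − b xⁿ` on the set where
`2b x^(n−1) ≠ 1`. -/
theorem stmt_7 (n : ℕ) (hn : 2 ≤ n) (b : ℝ) (x y : ℝ)
    (hxy : 2 * b * x ^ (n - 1) ≠ 1) :
    (-y + 2 * b * x ^ (n - 1) * y) *
        deriv (fun t : ℝ => (t ^ 2 + y ^ 2) ^ (n - 1) / (2 * b * t ^ (n - 1) - 1)) x
      + (x + b * x ^ (n - 2) * y ^ 2 - b * x ^ n) *
        deriv (fun t : ℝ => (x ^ 2 + t ^ 2) ^ (n - 1) / (2 * b * x ^ (n - 1) - 1)) y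
      = 0 := by
  obtain ⟨k, rfl⟩ : ∃ k, n = k + 2 := ⟨n - 2, by omega⟩
  simp only [show k + 2 - 1 = k + 1 from rfl, show k + 2 - 2 = k from rfl] at *
  have hD : 2 * b * x ^ (k + 1) - 1 ≠ 0 := sub_ne_zero_of_ne hxy
  -- derivative in x
  have hu : HasDerivAt (fun t : ℝ => (t ^ 2 + y ^ 2) ^ (k + 1))
      (((k : ℝ) + 1) * (x ^ 2 + y ^ 2) ^ k * (2 * x)) x := by
    have := ((hasDerivAt_pow 2 x).add_const (y ^ 2)).pow (k + 1)
    exact this.congr_deriv (by push_cast; ring)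
  have hv : HasDerivAt (fun t : ℝ => 2 * b * t ^ (k + 1) - 1)
      (2 * b * (((k : ℝ) + 1) * x ^ k)) x := by
    have := ((hasDerivAt_pow (k + 1) x).const_mul (2 * b)).sub_const 1
    simpa using this.congr_deriv (by push_cast; ring)
  have hx : deriv (fun t : ℝ => (t ^ 2 + y ^ 2) ^ (k + 1) / (2 * b * t ^ (k + 1) - 1)) x
      = ((((k : ℝ) + 1) * (x ^ 2 + y ^ 2) ^ k * (2 * x)) * (2 * b * x ^ (k + 1) - 1)
        - (x ^ 2 + y ^ 2) ^ (k + 1) * (2 * b * (((k : ℝ) + 1) * x ^ k)))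
        / (2 * b * x ^ (k + 1) - 1) ^ 2 := (hu.div hv hD).deriv
  -- derivative in y
  have hw : HasDerivAt (fun t : ℝ => (x ^ 2 + t ^ 2) ^ (k + 1) / (2 * b * x ^ (k + 1) - 1))
      ((((k : ℝ) + 1) * (x ^ 2 + y ^ 2) ^ k * (2 * y)) / (2 * b * x ^ (k + 1) - 1)) y := by
    have h0 : HasDerivAt (fun t : ℝ => (x ^ 2 + t ^ 2) ^ (k + 1))
        (((k : ℝ) + 1) * (x ^ 2 + y ^ 2) ^ k * (2 * y)) y := by
      have := (((hasDerivAt_pow 2 y).const_add (x ^ 2)).pow (k + 1))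
      exact this.congr_deriv (by push_cast; ring)
    exact h0.div_const _
  rw [hx, hw.deriv]
  field_simp
  ring
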